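/- Let X, Y, Z be real Hilbert spaces (or more generally smooth Banach spaces with unique compatible semi-inner-products ⟨·,·⟩), and let T : X × Y → Z be a bounded bilinear operator. Then (x₀,y₀) ∈ M_T if and only if ‖x₀‖ = ‖y₀‖ = 1 and for all x ∈ X, y ∈ Y: ⟨T(x₀,y) + T(x,y₀), T(x₀,y₀)⟩_Z = ‖T‖² (⟨x,x₀⟩_X + ⟨y,y₀⟩_Y). -/

import Mathlib

lemma aux_inner {X Z : Type*} [NormedAddCommGroup X] [InnerProductSpace ℝ X]
    [NormedAddCommGroup Z] [InnerProductSpace ℝ Z]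
    (A : X →L[ℝ] Z) (c : ℝ) (hc : ∀ u, ‖A u‖ ≤ c * ‖u‖)
    (x₀ : X) (hx₀ : ‖x₀‖ = 1) (hA : ‖A x₀‖ = c) (x : X) :
    (inner ℝ (A x) (A x₀) : ℝ) = c ^ 2 * inner ℝ x x₀ := by
  set a : ℝ := (inner ℝ (A x) (A x₀) : ℝ) - c ^ 2 * inner ℝ x x₀ with ha
  set b : ℝ := ‖A x‖ ^ 2 - c ^ 2 * ‖x‖ ^ 2 with hb
  have key : ∀ t : ℝ, 2 * t * a + t ^ 2 * b ≤ 0 := by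
    intro t
    have hcnn : 0 ≤ c := hA ▸ norm_nonneg _
    have h1 : ‖A (x₀ + t • x)‖ ^ 2 ≤ (c * ‖x₀ + t • x‖) ^ 2 := by
      have := hc (x₀ + t • x)
      nlinarith [norm_nonneg (A (x₀ + t • x)), norm_nonneg (x₀ + t • x)]
    have e1 : A (x₀ + t • x) = A x₀ + t • A x := by simp
    have e2 : ‖A x₀ + t • A x‖ ^ 2
        = ‖A x₀‖ ^ 2 + 2 * (t * (inner ℝ (A x₀) (A x) : ℝ)) + t ^ 2 * ‖A x‖ ^ 2 := by
      rw [norm_add_sq_real, real_inner_smul_right, norm_smul, mul_pow, Real.norm_eq_abs, sq_abs]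
    have e3 : ‖x₀ + t • x‖ ^ 2
        = ‖x₀‖ ^ 2 + 2 * (t * (inner ℝ x₀ x : ℝ)) + t ^ 2 * ‖x‖ ^ 2 := by
      rw [norm_add_sq_real, real_inner_smul_right, norm_smul, mul_pow, Real.norm_eq_abs, sq_abs]
    rw [e1, e2] at h1
    have hsym : (inner ℝ (A x₀) (A x) : ℝ) = inner ℝ (A x) (A x₀) := real_inner_comm _ _
    have hsym2 : (inner ℝ x₀ x : ℝ) = inner ℝ x x₀ := real_inner_comm _ _
    have h2 : (c * ‖x₀ + t • x‖) ^ 2 = c ^ 2 * ‖x₀ + t • x‖ ^ 2 := by ring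
    rw [h2, e3, hx₀, hsym2] at h1
    rw [hsym, hA] at h1
    simp only [ha, hb]
    nlinarith [h1]
  rw [← sub_eq_zero]
  show a = 0
  by_contra hane
  have ha2 : 0 < a ^ 2 := pow_two_pos_of_ne_zero hane
  set ε : ℝ := 1 / (|b| + 1) with hε
  have hεpos : 0 < ε := by positivity
  have hεb : ε * (|b| + 1) = 1 := by
    rw [hε, one_div, inv_mul_cancel₀ (by positivity)]
  have := key (ε * a)
  have habs1 : b ≤ |b| := le_abs_self b
  have habs2 : -|b| ≤ b := neg_abs_le b
  have habs3 : 0 ≤ |b| := abs_nonneg b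
  nlinarith [mul_pos hεpos ha2, sq_nonneg (ε * a)]

/-- Characterization of the norm attainment set of a bounded bilinear operator
between real Hilbert spaces via the inner ℝ product. -/
theorem statement17 {X Y Z : Type*} [NormedAddCommGroup X] [InnerProductSpace ℝ X]
    [NormedAddCommGroup Y] [InnerProductSpace ℝ Y]
    [NormedAddCommGroup Z] [InnerProductSpace ℝ Z]
    [CompleteSpace X] [CompleteSpace Y] [CompleteSpace Z]
    (T : X →L[ℝ] Y →L[ℝ] Z) (hT : T ≠ 0) (x₀ : X) (y₀ : Y) :
    (max ‖x₀‖ ‖y₀‖ = 1 ∧ ‖T x₀ y₀‖ = ‖T‖) ↔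
      (‖x₀‖ = 1 ∧ ‖y₀‖ = 1 ∧ ∀ (x : X) (y : Y),
        (inner ℝ (T x₀ y + T x y₀) (T x₀ y₀) : ℝ) =
          ‖T‖ ^ 2 * ((inner ℝ x x₀ : ℝ) + (inner ℝ y y₀ : ℝ))) := by
  have hTpos : 0 < ‖T‖ := by
    rcases (norm_nonneg T).lt_or_eq with h | h
    · exact h
    · exact absurd ((ContinuousLinearMap.opNorm_zero_iff T).mp h.symm) hT
  constructor
  · rintro ⟨hmax, hatt⟩
    have hx1 : ‖x₀‖ ≤ 1 := hmax ▸ le_max_left ‖x₀‖ ‖y₀‖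
    have hy1 : ‖y₀‖ ≤ 1 := hmax ▸ le_max_right ‖x₀‖ ‖y₀‖
    have hbound : ‖T‖ ≤ ‖T‖ * ‖x₀‖ * ‖y₀‖ := hatt ▸ T.le_opNorm₂ x₀ y₀
    have hxy : 1 ≤ ‖x₀‖ * ‖y₀‖ := by nlinarith
    have hx : ‖x₀‖ = 1 :=
      le_antisymm hx1 (by nlinarith [norm_nonneg x₀, norm_nonneg y₀])
    have hy : ‖y₀‖ = 1 :=
      le_antisymm hy1 (by nlinarith [norm_nonneg x₀, norm_nonneg y₀])
    refine ⟨hx, hy, fun x y => ?_⟩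
    have k1 : (inner ℝ (T x y₀) (T x₀ y₀) : ℝ) = ‖T‖ ^ 2 * inner ℝ x x₀ := by
      have hc : ∀ u, ‖T.flip y₀ u‖ ≤ ‖T‖ * ‖u‖ := by
        intro u
        have h1 : ‖T u y₀‖ ≤ ‖T u‖ * ‖y₀‖ := (T u).le_opNorm y₀
        have h2 : ‖T u‖ ≤ ‖T‖ * ‖u‖ := T.le_opNorm u
        simp only [ContinuousLinearMap.flip_apply]
        nlinarith [norm_nonneg (T u), norm_nonneg u]
      exact aux_inner (T.flip y₀) ‖T‖ hc x₀ hx hatt x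
    have k2 : (inner ℝ (T x₀ y) (T x₀ y₀) : ℝ) = ‖T‖ ^ 2 * inner ℝ y y₀ := by
      have hc : ∀ u, ‖T x₀ u‖ ≤ ‖T‖ * ‖u‖ := by
        intro u
        have h1 : ‖T x₀ u‖ ≤ ‖T x₀‖ * ‖u‖ := (T x₀).le_opNorm u
        have h2 : ‖T x₀‖ ≤ ‖T‖ * ‖x₀‖ := T.le_opNorm x₀
        rw [hx, mul_one] at h2
        nlinarith [norm_nonneg u]
      exact aux_inner (T x₀) ‖T‖ hc y₀ hy hatt y
    rw [inner_add_left, k1, k2]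
    ring
  · rintro ⟨hx, hy, hmain⟩
    refine ⟨by rw [hx, hy]; simp, ?_⟩
    have h := hmain x₀ 0
    simp only [map_zero, inner_zero_left, add_zero] at h
    rw [inner_add_left, inner_zero_left, zero_add] at h
    rw [real_inner_self_eq_norm_sq, real_inner_self_eq_norm_sq, hx] at h
    have h' : ‖T x₀ y₀‖ ^ 2 = ‖T‖ ^ 2 := by rw [h]; ring
    have := congrArg Real.sqrt h'
    rwa [Real.sqrt_sq (norm_nonneg _), Real.sqrt_sq hTpos.le] at this
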